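/- Let s ∈ (0,1), p ∈ (1,∞), N > sp, 0 < μ < sp, let V : ℝ^N → ℝ be continuous with inf_{ℝ^N} V > 0, let f satisfy (f1)–(f3), and fix ε > 0 and c ∈ ℝ. Let (u_n) be a sequence with ‖u_n‖_ε < ∞ such that J_ε(u_n) → c and ⟨J'_ε(u_n), u_n⟩ = o_n(1)·‖u_n‖_ε. Then sup_n ‖u_n‖_ε < ∞. -/

import Mathlib

open MeasureTheory Filter Topology
open scoped ENNReal

noncomputable section

/-- Euclidean space `ℝ^N`. -/
abbrev Euc (N : ℕ) : Type := EuclideanSpace ℝ (Fin N)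

/-- The `p`-th power of the Gagliardo seminorm `[u]_{s,p}^p`. -/
def gagliardoP (N : ℕ) (s p : ℝ) (u : Euc N → ℝ) : ℝ≥0∞ :=
  ∫⁻ x : Euc N, ∫⁻ y : Euc N,
    ENNReal.ofReal (|u x - u y| ^ p / ‖x - y‖ ^ ((N : ℝ) + s * p))

/-- The `p`-th power of the `L^p` norm, `‖u‖_{L^p}^p`. -/
def lpP (N : ℕ) (p : ℝ) (u : Euc N → ℝ) : ℝ≥0∞ :=
  ∫⁻ x : Euc N, ENNReal.ofReal (|u x| ^ p)

/-- The `p`-th power of the norm `‖u‖_ε^p = [u]_{s,p}^p + ∫ V(εx)|u|^p dx`. -/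
def normEpsP (N : ℕ) (s p ε : ℝ) (V : Euc N → ℝ) (u : Euc N → ℝ) : ℝ≥0∞ :=
  gagliardoP N s p u + ∫⁻ x : Euc N, ENNReal.ofReal (V (ε • x) * |u x| ^ p)

/-- The primitive `F(t) = ∫_0^t f(τ) dτ`. -/
def Ffun (f : ℝ → ℝ) (t : ℝ) : ℝ := ∫ τ in (0:ℝ)..t, f τ

/-- The nonlocal term `Σ(u) = (1/2) ∬ F(u(x))F(u(y))/|x−y|^μ dx dy`. -/
def SigmaFun (N : ℕ) (μ : ℝ) (f : ℝ → ℝ) (u : Euc N → ℝ) : ℝ :=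
  (1 / 2) * ∫ x : Euc N, ∫ y : Euc N, Ffun f (u x) * Ffun f (u y) / ‖x - y‖ ^ μ

/-- The energy functional `J_ε(u) = (1/p)‖u‖_ε^p − Σ(u)`. -/
def Jfun (N : ℕ) (s p ε μ : ℝ) (V : Euc N → ℝ) (f : ℝ → ℝ) (u : Euc N → ℝ) : ℝ :=
  (1 / p) * (normEpsP N s p ε V u).toReal - SigmaFun N μ f u

/-- The derivative pairing `⟨J'_ε(u), v⟩`. -/
def Jderiv (N : ℕ) (s p ε μ : ℝ) (V : Euc N → ℝ) (f : ℝ → ℝ)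
    (u v : Euc N → ℝ) : ℝ :=
  (∫ x : Euc N, ∫ y : Euc N,
      |u x - u y| ^ (p - 2) * (u x - u y) * (v x - v y) / ‖x - y‖ ^ ((N : ℝ) + s * p))
  + (∫ x : Euc N, V (ε • x) * |u x| ^ (p - 2) * u x * v x)
  - (∫ x : Euc N, ∫ y : Euc N, Ffun f (u y) * f (u x) * v x / ‖x - y‖ ^ μ)

/-- The Nehari manifold `N_ε = {u : 0 < ‖u‖_ε < ∞, ⟨J'_ε(u), u⟩ = 0}`. -/
def Nehari (N : ℕ) (s p ε μ : ℝ) (V : Euc N → ℝ) (f : ℝ → ℝ) :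
    Set (Euc N → ℝ) :=
  {u | 0 < normEpsP N s p ε V u ∧ normEpsP N s p ε V u < ⊤ ∧
    Jderiv N s p ε μ V f u u = 0}



lemma abs_rpow_trick {p : ℝ} (hp : 1 < p) (a : ℝ) :
    |a| ^ (p - 2) * a * a = |a| ^ p := by
  rcases eq_or_ne a 0 with rfl | ha
  · simp [Real.zero_rpow (show p ≠ 0 by linarith)]
  · have h0 : (0:ℝ) < |a| := abs_pos.2 ha
    have h2 : a * a = |a| ^ (2:ℝ) := by
      rw [show (2:ℝ) = ((2:ℕ):ℝ) by norm_num, Real.rpow_natCast, pow_two]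
      exact (abs_mul_abs_self a).symm
    calc |a| ^ (p-2) * a * a = |a|^(p-2) * (a*a) := by ring
      _ = |a|^(p-2) * |a|^(2:ℝ) := by rw [h2]
      _ = |a|^(p-2+2) := (Real.rpow_add h0 _ _).symm
      _ = |a|^p := by norm_num

lemma integral_integral_eq_lintegral {N : ℕ} {g : Euc N → Euc N → ℝ}
    (hg : Measurable (Function.uncurry g)) (hnn : ∀ x y, 0 ≤ g x y)
    (hfin : (∫⁻ x : Euc N, ∫⁻ y : Euc N, ENNReal.ofReal (g x y)) ≠ ⊤) :
    ∫ x : Euc N, ∫ y : Euc N, g x y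
      = (∫⁻ x : Euc N, ∫⁻ y : Euc N, ENNReal.ofReal (g x y)).toReal := by
  have hGmeas : Measurable fun x : Euc N => ∫⁻ y : Euc N, ENNReal.ofReal (g x y) :=
    Measurable.lintegral_prod_right' (f := fun z => ENNReal.ofReal (Function.uncurry g z))
      (ENNReal.measurable_ofReal.comp hg)
  have hinner : ∀ x : Euc N, ∫ y : Euc N, g x y = (∫⁻ y : Euc N, ENNReal.ofReal (g x y)).toReal := by
    intro x
    exact integral_eq_lintegral_of_nonneg_ae (ae_of_all _ (hnn x))
      (hg.of_uncurry_left).aestronglyMeasurable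
  simp only [hinner]
  rw [integral_eq_lintegral_of_nonneg_ae (ae_of_all _ fun x => ENNReal.toReal_nonneg)
      hGmeas.ennreal_toReal.aestronglyMeasurable]
  congr 1
  refine lintegral_congr_ae ?_
  filter_upwards [ae_lt_top hGmeas hfin] with x hx
  rw [ENNReal.ofReal_toReal hx.ne]

set_option maxHeartbeats 2000000 in
/-- Boundedness of Palais–Smale sequences (Lemma 3.6): if `J_ε(u_n) → c` and
`⟨J'_ε(u_n), u_n⟩ = o_n(1)·‖u_n‖_ε`, then `(u_n)` is bounded in `W_ε`. -/
theorem stmt_12 {N : ℕ} {s p : ℝ} (hs0 : 0 < s) (hs1 : s < 1) (hp : 1 < p)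
    (hN : s * p < (N : ℝ))
    (μ : ℝ) (hμ0 : 0 < μ) (hμ : μ < s * p)
    (V : Euc N → ℝ) (hVc : Continuous V)
    (V₀ : ℝ) (hV₀ : 0 < V₀) (hVlb : ∀ x, V₀ ≤ V x)
    (f : ℝ → ℝ) (hfc : Continuous f) (hf0 : ∀ t ≤ (0 : ℝ), f t = 0)
    (q₁ q₂ C : ℝ) (hq₁ : p < q₁) (hq₁₂ : q₁ ≤ q₂)
    (hq₂ : q₂ < p * ((N : ℝ) - μ) / ((N : ℝ) - s * p)) (hCpos : 0 < C)
    (hf1 : ∀ t : ℝ, |f t| ≤ C * (|t| ^ (q₁ - 1) + |t| ^ (q₂ - 1)))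
    (θ : ℝ) (hθ : p < θ)
    (hf2 : ∀ t : ℝ, 0 < t → 0 < θ * Ffun f t ∧ θ * Ffun f t ≤ 2 * f t * t)
    (hf3 : StrictMonoOn (fun t : ℝ => f t / t ^ (p / 2 - 1)) (Set.Ioi 0))
    (ε : ℝ) (hε : 0 < ε) (c : ℝ)
    (u : ℕ → Euc N → ℝ) (hmeas : ∀ n, Measurable (u n))
    (hfin : ∀ n, normEpsP N s p ε V (u n) < ⊤)
    (hJ : Tendsto (fun n => Jfun N s p ε μ V f (u n)) atTop (nhds c))
    (η : ℕ → ℝ) (hη : Tendsto η atTop (nhds 0))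
    (hps : ∀ n, Jderiv N s p ε μ V f (u n) (u n) =
      η n * ((normEpsP N s p ε V (u n)).toReal) ^ (1 / p)) :
    (⨆ n, normEpsP N s p ε V (u n)) < ⊤ := by
  classical
  have hp0 : (0:ℝ) < p := by linarith
  have hθ0 : (0:ℝ) < θ := by linarith
  set γ : ℝ := θ/p - 1 with hγdef
  clear_value γ
  have hγ : 0 < γ := by
    have h1 : 1 < θ/p := (one_lt_div hp0).mpr hθ
    simp only [hγdef]; linarith
  -- properties of F
  have hF0 : ∀ t ≤ (0:ℝ), Ffun f t = 0 := by
    intro t ht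
    unfold Ffun
    rw [intervalIntegral.integral_congr (g := fun _ => (0:ℝ))
      (fun τ hτ => hf0 τ (by
        rcases Set.mem_uIcc.mp hτ with h | h
        · linarith [h.1, h.2]
        · exact h.2))]
    simp
  have hFpos : ∀ t, 0 < t → 0 < Ffun f t := by
    intro t ht
    have h := (hf2 t ht).1
    nlinarith
  have hFnn : ∀ t, 0 ≤ Ffun f t := by
    intro t
    rcases le_or_gt t 0 with h | h
    · rw [hF0 t h]
    · exact (hFpos t h).le
  have hkey : ∀ t, θ * Ffun f t ≤ 2 * (f t * t) := by
    intro t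
    rcases le_or_gt t 0 with h | h
    · rw [hF0 t h, hf0 t h]; simp
    · have h2 := (hf2 t h).2
      nlinarith
  -- rpow helper
  have hRle : ∀ T : ℝ, 0 ≤ T → T ^ (1/p : ℝ) ≤ 1 + T := by
    intro T hT
    rcases le_total T 1 with h | h
    · have h2 : T ^ (1/p:ℝ) ≤ 1 := Real.rpow_le_one hT h (by positivity : (0:ℝ) ≤ 1/p)
      linarith
    · have h1 : T ^ (1/p:ℝ) ≤ T ^ (1:ℝ) :=
        Real.rpow_le_rpow_of_exponent_le h (by rw [div_le_one hp0]; linarith)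
      rw [Real.rpow_one] at h1; linarith
  -- key identity : Jderiv (u n) (u n) = ‖u n‖ᵖ - D
  have hJd : ∀ n, Jderiv N s p ε μ V f (u n) (u n)
      = (normEpsP N s p ε V (u n)).toReal
        - ∫ x : Euc N, ∫ y : Euc N, Ffun f (u n y) * f (u n x) * u n x / ‖x - y‖ ^ μ := by
    intro n
    have hgagfin : gagliardoP N s p (u n) ≠ ⊤ := by
      have h := hfin n; unfold normEpsP at h
      exact (lt_of_le_of_lt le_self_add h).ne
    have hvfin : (∫⁻ x : Euc N, ENNReal.ofReal (V (ε • x) * |u n x| ^ p)) ≠ ⊤ := by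
      have h := hfin n; unfold normEpsP at h
      exact (lt_of_le_of_lt le_add_self h).ne
    have hI1 : (∫ x : Euc N, ∫ y : Euc N,
        |u n x - u n y| ^ (p - 2) * (u n x - u n y) * (u n x - u n y) / ‖x - y‖ ^ ((N:ℝ) + s*p))
        = (gagliardoP N s p (u n)).toReal := by
      have hre : ∀ x y : Euc N,
          |u n x - u n y| ^ (p - 2) * (u n x - u n y) * (u n x - u n y) / ‖x - y‖ ^ ((N:ℝ) + s*p)
          = |u n x - u n y| ^ p / ‖x - y‖ ^ ((N:ℝ) + s*p) := by
        intro x y; rw [abs_rpow_trick hp]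
      simp only [hre]
      unfold gagliardoP
      refine integral_integral_eq_lintegral ?_ (fun x y => div_nonneg
        (Real.rpow_nonneg (abs_nonneg _) _) (Real.rpow_nonneg (norm_nonneg _) _)) hgagfin
      exact ((((hmeas n).comp measurable_fst).sub ((hmeas n).comp measurable_snd)).abs.pow
          measurable_const).div (((measurable_fst.sub measurable_snd).norm).pow measurable_const)
    have hI2 : (∫ x : Euc N, V (ε • x) * |u n x| ^ (p - 2) * u n x * u n x)
        = (∫⁻ x : Euc N, ENNReal.ofReal (V (ε • x) * |u n x| ^ p)).toReal := by
      have hre : ∀ x : Euc N, V (ε • x) * |u n x| ^ (p-2) * u n x * u n x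
          = V (ε • x) * |u n x| ^ p := by
        intro x
        calc V (ε • x) * |u n x| ^ (p-2) * u n x * u n x
            = V (ε • x) * (|u n x| ^ (p-2) * u n x * u n x) := by ring
          _ = _ := by rw [abs_rpow_trick hp]
      simp only [hre]
      refine integral_eq_lintegral_of_nonneg_ae (ae_of_all _ fun x =>
        mul_nonneg (hV₀.le.trans (hVlb _)) (Real.rpow_nonneg (abs_nonneg _) _)) ?_
      exact ((hVc.measurable.comp (continuous_const_smul ε).measurable).mul
        ((hmeas n).abs.pow measurable_const)).aestronglyMeasurable
    unfold Jderiv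
    rw [hI1, hI2]
    have hadd : (normEpsP N s p ε V (u n)).toReal
        = (gagliardoP N s p (u n)).toReal
          + (∫⁻ x : Euc N, ENNReal.ofReal (V (ε • x) * |u n x| ^ p)).toReal := by
      unfold normEpsP
      rw [ENNReal.toReal_add hgagfin hvfin]
    rw [hadd]
  -- eventual smallness
  obtain ⟨n₀, hn₀⟩ : ∃ n₀, ∀ n ≥ n₀,
      |Jfun N s p ε μ V f (u n)| < |c| + 1 ∧ |η n| < min (1/2) (γ/2) := by
    have h1 : ∀ᶠ n in atTop, |Jfun N s p ε μ V f (u n)| < |c| + 1 :=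
      (hJ.abs).eventually_lt_const (by linarith [abs_nonneg c])
    have h2 : ∀ᶠ n in atTop, |η n| < min (1/2) (γ/2) := by
      have h3 : Tendsto (fun n => |η n|) atTop (nhds 0) := by simpa using hη.abs
      exact h3.eventually_lt_const (lt_min (by norm_num) (by positivity))
    exact eventually_atTop.mp (h1.and h2)
  set Cb : ℝ := |c| + 1 with hCbdef
  clear_value Cb
  have hCb : 0 < Cb := by rw [hCbdef]; positivity
  set M : ℝ := max (p * Cb) (max 1 (2*θ*Cb/γ + 1)) with hMdef
  clear_value M
  have hM1 : (1:ℝ) ≤ M := by rw [hMdef]; exact le_trans (le_max_left 1 _) (le_max_right _ _)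
  have hMa : p * Cb ≤ M := by rw [hMdef]; exact le_max_left _ _
  have hMc : 2*θ*Cb/γ + 1 ≤ M := by
    rw [hMdef]; exact le_trans (le_max_right 1 _) (le_max_right _ _)
  -- the main bound for n ≥ n₀
  have hMb : ∀ n ≥ n₀, (normEpsP N s p ε V (u n)).toReal ≤ M := by
    intro n hn
    obtain ⟨hJn, hηn⟩ := hn₀ n hn
    set Tn : ℝ := (normEpsP N s p ε V (u n)).toReal with hTn
    clear_value Tn
    have hTn0 : 0 ≤ Tn := by rw [hTn]; exact ENNReal.toReal_nonneg
    set R : ℝ := Tn ^ (1/p : ℝ) with hRdef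
    clear_value R
    have hR0 : 0 ≤ R := by rw [hRdef]; exact Real.rpow_nonneg hTn0 _
    have hR1 : R ≤ 1 + Tn := by rw [hRdef]; exact hRle Tn hTn0
    set Jn : ℝ := Jfun N s p ε μ V f (u n) with hJndef
    clear_value Jn
    have hJnle : Jn ≤ Cb := (abs_lt.mp hJn).2.le
    set I : Euc N → ℝ := fun x => ∫ y : Euc N, Ffun f (u n y) / ‖x - y‖ ^ μ with hI
    clear_value I
    have hInn : ∀ x, 0 ≤ I x := by
      intro x
      rw [hI]
      exact integral_nonneg fun y => div_nonneg (hFnn _) (Real.rpow_nonneg (norm_nonneg _) _)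
    have hAeq : ∀ x : Euc N,
        (∫ y : Euc N, Ffun f (u n x) * Ffun f (u n y) / ‖x - y‖ ^ μ)
          = Ffun f (u n x) * I x := by
      intro x
      simp only [hI, mul_div_assoc]
      exact integral_const_mul _ _
    have hBeq : ∀ x : Euc N,
        (∫ y : Euc N, Ffun f (u n y) * f (u n x) * u n x / ‖x - y‖ ^ μ)
          = f (u n x) * u n x * I x := by
      intro x
      have h : ∀ y : Euc N, Ffun f (u n y) * f (u n x) * u n x / ‖x - y‖ ^ μ
          = (f (u n x) * u n x) * (Ffun f (u n y) / ‖x - y‖ ^ μ) := fun y => by ring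
      simp only [hI, h]
      exact integral_const_mul _ _
    have eqJ : Jn = (1/p) * Tn - (1/2) * ∫ x : Euc N, Ffun f (u n x) * I x := by
      rw [hJndef]
      unfold Jfun SigmaFun
      simp only [hAeq]
      rw [← hTn]
    have eqD : Tn - (∫ x : Euc N, f (u n x) * u n x * I x) = η n * R := by
      have h := hps n
      rw [hJd n] at h
      simp only [hBeq] at h
      rw [← hTn, ← hRdef] at h
      exact h
    set SA : ℝ := ∫ x : Euc N, Ffun f (u n x) * I x with hSA
    set SB : ℝ := ∫ x : Euc N, f (u n x) * u n x * I x with hSB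
    clear_value SA SB
    by_cases hA : Integrable (fun x : Euc N => Ffun f (u n x) * I x)
    · by_cases hB : Integrable (fun x : Euc N => f (u n x) * u n x * I x)
      · -- both integrable: standard Palais–Smale estimate
        have hAB : ∀ x, Ffun f (u n x) * I x ≤ (2/θ) * (f (u n x) * u n x * I x) := by
          intro x
          have h1 : Ffun f (u n x) ≤ 2/θ * (f (u n x) * u n x) := by
            rw [div_mul_eq_mul_div, le_div_iff₀ hθ0]
            nlinarith [hkey (u n x)]
          calc Ffun f (u n x) * I x
              ≤ (2/θ * (f (u n x) * u n x)) * I x :=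
                mul_le_mul_of_nonneg_right h1 (hInn x)
            _ = (2/θ) * (f (u n x) * u n x * I x) := by ring
        have hmono : θ * SA ≤ 2 * SB := by
          have h : SA ≤ (2/θ) * SB := by
            rw [hSA, hSB, ← integral_const_mul]
            exact integral_mono hA (hB.const_mul _) hAB
          calc θ * SA ≤ θ * ((2/θ) * SB) := mul_le_mul_of_nonneg_left h hθ0.le
            _ = 2 * SB := by field_simp
        have hηγ : |η n| ≤ γ/2 := (lt_min_iff.mp hηn).2.le
        have eB : SB = Tn - η n * R := by linarith
        have s2 : -(η n * R) ≤ (γ/2) * R := by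
          nlinarith [mul_le_mul_of_nonneg_right (neg_le_abs (η n)) hR0,
            mul_le_mul_of_nonneg_right hηγ hR0]
        have s5 : (γ/2)*R ≤ (γ/2)*(1+Tn) :=
          mul_le_mul_of_nonneg_left hR1 (by positivity)
        have hJθ : θ * Jn ≤ θ * Cb := mul_le_mul_of_nonneg_left hJnle hθ0.le
        have hexp : γ * Tn = θ * ((1/p) * Tn) - Tn := by rw [hγdef]; field_simp
        have hSAle : θ * ((1/p) * Tn) - θ * Jn ≤ Tn - η n * R := by
          have h1 : θ * Jn = θ * ((1/p) * Tn) - θ * ((1/2) * SA) := by rw [eqJ]; ring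
          nlinarith [hmono, eB]
        have s6 : (γ/2) * Tn ≤ θ*Cb + γ/2 := by linarith
        have s7 : Tn ≤ 2*θ*Cb/γ + 1 := by
          have h2 := mul_le_mul_of_nonneg_left s6 (show (0:ℝ) ≤ 2/γ by positivity)
          have e1 : (2/γ)*((γ/2)*Tn) = Tn := by field_simp
          have e2 : (2/γ)*(θ*Cb + γ/2) = 2*θ*Cb/γ + 1 := by field_simp
          linarith
        exact s7.trans hMc
      · -- D not integrable
        have hB0 : SB = 0 := by rw [hSB]; exact integral_undef hB
        have hTR : Tn = η n * R := by rw [hB0] at eqD; linarith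
        have hη2 : |η n| ≤ 1/2 := (lt_min_iff.mp hηn).1.le
        have h1 : Tn ≤ (1/2)*(1+Tn) := by
          have h2 : η n * R ≤ |η n| * R := mul_le_mul_of_nonneg_right (le_abs_self _) hR0
          have h3 : |η n| * R ≤ (1/2) * R := mul_le_mul_of_nonneg_right hη2 hR0
          have h4 : (1/2) * R ≤ (1/2)*(1+Tn) := by linarith
          linarith
        have : Tn ≤ 1 := by linarith
        linarith
    · -- Σ not integrable
      have hA0 : SA = 0 := by rw [hSA]; exact integral_undef hA
      have hTJ : Tn = p * Jn := by
        rw [hA0] at eqJ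
        field_simp at eqJ
        linarith
      have : Tn ≤ p * Cb := by
        rw [hTJ]
        exact mul_le_mul_of_nonneg_left hJnle hp0.le
      exact this.trans hMa
  -- assemble the global bound
  set S : ℝ := M + ∑ i ∈ Finset.range n₀, (normEpsP N s p ε V (u i)).toReal with hSdef
  have hSnn : 0 ≤ ∑ i ∈ Finset.range n₀, (normEpsP N s p ε V (u i)).toReal :=
    Finset.sum_nonneg fun i _ => ENNReal.toReal_nonneg
  have hub : ∀ n, (normEpsP N s p ε V (u n)).toReal ≤ S := by
    intro n
    rcases lt_or_ge n n₀ with h | h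
    · have h1 := Finset.single_le_sum
        (f := fun i => (normEpsP N s p ε V (u i)).toReal)
        (fun i _ => ENNReal.toReal_nonneg) (Finset.mem_range.2 h)
      have hM0 : (0:ℝ) ≤ M := by linarith
      simp only [hSdef]; linarith
    · have := hMb n h
      simp only [hSdef]; linarith
  refine lt_of_le_of_lt (iSup_le fun n => ?_) (ENNReal.ofReal_lt_top : ENNReal.ofReal S < ⊤)
  rw [← ENNReal.ofReal_toReal (hfin n).ne]
  exact ENNReal.ofReal_le_ofReal (hub n)
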